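/- Equivalence of tail-summability and R-linear convergence: Let (a_ℓ)_{ℓ≥0} be a sequence of nonnegative reals. Then the following are equivalent: (i) there exists C_sum > 0 such that Σ_{ℓ'=ℓ+1}^{∞} a_{ℓ'} ≤ C_sum · a_ℓ for all ℓ ≥ 0; (ii) there exist C_lin ≥ 1 and q_lin ∈ (0,1) such that a_{ℓ+n} ≤ C_lin · q_lin^n · a_ℓ for all ℓ, n ≥ 0. -/
import Mathlib


open Finset

/-- Equivalence of tail-summability and R-linear convergence
    ([fps2023, Lemma 10]). -/
theorem tail_summable_iff_Rlinear
    (a : ℕ → ℝ) (ha : ∀ ℓ, 0 ≤ a ℓ) :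
    (∃ Csum : ℝ, 0 < Csum ∧
        ∀ ℓ M : ℕ, ∑ k ∈ Finset.range M, a (ℓ + 1 + k) ≤ Csum * a ℓ) ↔
    (∃ Clin qlin : ℝ, 1 ≤ Clin ∧ 0 < qlin ∧ qlin < 1 ∧
        ∀ ℓ n : ℕ, a (ℓ + n) ≤ Clin * qlin ^ n * a ℓ) := by
  constructor
  · rintro ⟨C, hC, h⟩
    have hsum : ∀ ℓ, Summable (fun k => a (ℓ + 1 + k)) := fun ℓ =>
      summable_of_sum_range_le (fun k => ha _) (h ℓ)
    set T : ℕ → ℝ := fun ℓ => ∑' k, a (ℓ + 1 + k) with hT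
    have hT0 : ∀ ℓ, 0 ≤ T ℓ := fun ℓ => tsum_nonneg (fun k => ha _)
    have hTle : ∀ ℓ, T ℓ ≤ C * a ℓ := fun ℓ =>
      Summable.tsum_le_of_sum_range_le (hsum ℓ) (h ℓ)
    have hrec : ∀ ℓ, T ℓ = a (ℓ + 1) + T (ℓ + 1) := by
      intro ℓ
      have h0 := Summable.tsum_eq_zero_add (hsum ℓ)
      calc T ℓ = a (ℓ + 1 + 0) + ∑' k, a (ℓ + 1 + (k + 1)) := h0
        _ = a (ℓ + 1) + T (ℓ + 1) := by
            congr 1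
            exact tsum_congr fun k => by congr 1; omega
    set S : ℕ → ℝ := fun ℓ => a ℓ + T ℓ with hS
    have hSle : ∀ ℓ, S ℓ ≤ (1 + C) * a ℓ := by
      intro ℓ
      have := hTle ℓ
      simp only [hS]
      nlinarith [ha ℓ]
    have haS : ∀ ℓ, a ℓ ≤ S ℓ := fun ℓ => by simp only [hS]; nlinarith [hT0 ℓ]
    have hstep : ∀ ℓ, S (ℓ + 1) ≤ (C / (1 + C)) * S ℓ := by
      intro ℓ
      have h1 : S (ℓ + 1) = T ℓ := by simp only [hS]; rw [hrec ℓ]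
      have h2 : a ℓ = S ℓ - T ℓ := by simp only [hS]; ring
      have h3 : T ℓ ≤ C * (S ℓ - T ℓ) := by rw [← h2]; exact hTle ℓ
      rw [h1, div_mul_eq_mul_div, le_div_iff₀ (by linarith)]
      nlinarith
    refine ⟨1 + C, C / (1 + C), by linarith, div_pos hC (by linarith),
      (div_lt_one (by linarith)).2 (by linarith), ?_⟩
    intro ℓ n
    have key : S (ℓ + n) ≤ (C / (1 + C)) ^ n * S ℓ := by
      induction n with
      | zero => simp
      | succ n ih =>
        have := hstep (ℓ + n)
        have hq : 0 ≤ C / (1 + C) := le_of_lt (div_pos hC (by linarith))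
        calc S (ℓ + (n + 1)) ≤ (C / (1 + C)) * S (ℓ + n) := hstep (ℓ + n)
          _ ≤ (C / (1 + C)) * ((C / (1 + C)) ^ n * S ℓ) := by
              exact mul_le_mul_of_nonneg_left ih hq
          _ = (C / (1 + C)) ^ (n + 1) * S ℓ := by ring
    have hq : 0 ≤ (C / (1 + C)) ^ n := pow_nonneg (le_of_lt (div_pos hC (by linarith))) n
    calc a (ℓ + n) ≤ S (ℓ + n) := haS _
      _ ≤ (C / (1 + C)) ^ n * S ℓ := key
      _ ≤ (C / (1 + C)) ^ n * ((1 + C) * a ℓ) := mul_le_mul_of_nonneg_left (hSle ℓ) hq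
      _ = (1 + C) * (C / (1 + C)) ^ n * a ℓ := by ring
  · rintro ⟨Cl, q, hCl, hq0, hq1, h⟩
    refine ⟨Cl * q / (1 - q), div_pos (mul_pos (lt_of_lt_of_le one_pos hCl) hq0) (by linarith), ?_⟩
    intro ℓ M
    calc ∑ k ∈ Finset.range M, a (ℓ + 1 + k)
        ≤ ∑ k ∈ Finset.range M, Cl * q ^ (1 + k) * a ℓ := by
          apply Finset.sum_le_sum
          intro k _
          have := h ℓ (1 + k)
          calc a (ℓ + 1 + k) = a (ℓ + (1 + k)) := by congr 1; omega
            _ ≤ Cl * q ^ (1 + k) * a ℓ := h ℓ (1 + k)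
      _ = (Cl * q * a ℓ) * ∑ k ∈ Finset.range M, q ^ k := by
          rw [Finset.mul_sum]
          apply Finset.sum_congr rfl
          intro k _
          rw [pow_add]; ring
      _ ≤ (Cl * q * a ℓ) * (1 - q)⁻¹ := by
          have hgeom : ∑ k ∈ Finset.range M, q ^ k ≤ (1 - q)⁻¹ := by
            rw [← tsum_geometric_of_lt_one hq0.le hq1]
            exact Summable.sum_le_tsum _ (fun i _ => pow_nonneg hq0.le i)
              (summable_geometric_of_lt_one hq0.le hq1)
          apply mul_le_mul_of_nonneg_left hgeom
          have := ha ℓ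
          positivity
      _ = Cl * q / (1 - q) * a ℓ := by field_simp
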